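/- Let f ∈ F₁(a,b) be strictly convex on (a,b) and let P be a probability measure on a measurable space (Ω,M). Then Q ↦ D_f(Q‖P) is strictly convex on the set {Q : D_f(Q‖P) < ∞}: for any two distinct probability measures Q₀, Q₁ with D_f(Q₀‖P) < ∞ and D_f(Q₁‖P) < ∞ and any t ∈ (0,1), D_f(tQ₁ + (1−t)Q₀ ‖ P) < t·D_f(Q₁‖P) + (1−t)·D_f(Q₀‖P). -/

import Mathlib

open MeasureTheory Filter Set Topology ENNReal
open scoped Classical

noncomputable section

/-- The set of bounded measurable real-valued functions on `Ω`. -/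
def Mb (Ω : Type*) [MeasurableSpace Ω] : Set (Ω → ℝ) :=
  {g | Measurable g ∧ ∃ C : ℝ, ∀ x, |g x| ≤ C}

/-- The set of bounded continuous real-valued functions on `S`. -/
def Cb (S : Type*) [TopologicalSpace S] : Set (S → ℝ) :=
  {g | Continuous g ∧ ∃ C : ℝ, ∀ x, |g x| ≤ C}

/-- The positive part of an extended real number, as an element of `ℝ≥0∞`. -/
def posE (x : EReal) : ℝ≥0∞ := if x = ⊤ then ⊤ else ENNReal.ofReal x.toReal

/-- The extended-real-valued integral of an `EReal`-valued function, defined as the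
difference of the lower integrals of the positive and negative parts, with the
convention `∞ - ∞ = -∞`. -/
def eIntegral {Ω : Type*} [MeasurableSpace Ω] (P : Measure Ω) (h : Ω → EReal) : EReal :=
  ((∫⁻ x, posE (h x) ∂P : ℝ≥0∞) : EReal) - ((∫⁻ x, posE (-(h x)) ∂P : ℝ≥0∞) : EReal)

/-- The Legendre transform `f*(y) = sup_x {x*y - f(x)}` of `f : ℝ → (-∞,∞]`. -/
def fstar (f : ℝ → EReal) (y : ℝ) : EReal := ⨆ x : ℝ, (((x * y : ℝ) : EReal) - f x)

/-- `f : ℝ → (-∞,∞]` is (the convex LSC extension of) an element of `F₁(a,b)`: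
convex, lower semicontinuous, never `-∞`, finite exactly on the interval `(a,b)`
(with `+∞` strictly outside `[a,b]`), and `f(1) = 0` with `a < 1 < b`. -/
structure IsF1 (a b : EReal) (f : ℝ → EReal) : Prop where
  a_lt_one : a < ((1 : ℝ) : EReal)
  one_lt_b : ((1 : ℝ) : EReal) < b
  convex : ∀ x y t : ℝ, 0 < t → t < 1 →
    f (t * x + (1 - t) * y) ≤ ((t : ℝ) : EReal) * f x + (((1 - t : ℝ)) : EReal) * f y
  lsc : LowerSemicontinuous f
  ne_bot : ∀ x, f x ≠ ⊥
  finite_on : ∀ x : ℝ, a < (x : EReal) → (x : EReal) < b → f x ≠ ⊤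
  top_outside : ∀ x : ℝ, ((x : EReal) < a ∨ b < (x : EReal)) → f x = ⊤
  at_one : f 1 = 0

/-- `Λ_f^P[g] = inf_{ν ∈ ℝ} {ν + E_P[f*(g - ν)]}`. -/
def LambdaF {Ω : Type*} [MeasurableSpace Ω] (f : ℝ → EReal) (P : Measure Ω) (g : Ω → ℝ) :
    EReal :=
  ⨅ ν : ℝ, ((ν : EReal) + eIntegral P (fun x => fstar f (g x - ν)))

/-- The classical `f`-divergence `D_f(Q‖P) = E_P[f(dQ/dP)]` if `Q ≪ P`, else `∞`. -/
def fDivE {Ω : Type*} [MeasurableSpace Ω] (f : ℝ → EReal) (Q P : Measure Ω) : EReal :=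
  if Q ≪ P then eIntegral P (fun x => f ((Q.rnDeriv P x).toReal)) else ⊤

/-- The `(f,Γ)`-divergence `D_f^Γ(Q‖P) = sup_{g ∈ Γ} {E_Q[g] - Λ_f^P[g]}`. -/
def fGammaDiv {Ω : Type*} [MeasurableSpace Ω] (f : ℝ → EReal) (Γ : Set (Ω → ℝ))
    (Q P : Measure Ω) : EReal :=
  ⨆ g ∈ Γ, (((∫ x, g x ∂Q : ℝ) : EReal) - LambdaF f P g)

/-- The `Γ`-IPM `W^Γ(Q,P) = sup_{g ∈ Γ} {E_Q[g] - E_P[g]}`. -/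
def ipmW {Ω : Type*} [MeasurableSpace Ω] (Γ : Set (Ω → ℝ)) (Q P : Measure Ω) : EReal :=
  ⨆ g ∈ Γ, (((∫ x, g x ∂Q : ℝ) : EReal) - ((∫ x, g x ∂P : ℝ) : EReal))

end

/-- `f` is strictly convex on the interval `(a,b)` (with `a, b ∈ [-∞,∞]`). -/
def StrictConvexOnAB (a b : EReal) (f : ℝ → EReal) : Prop :=
  ∀ x y t : ℝ, a < (x : EReal) → (x : EReal) < b → a < (y : EReal) → (y : EReal) < b →
    x ≠ y → 0 < t → t < 1 →
    f (t * x + (1 - t) * y) < ((t : ℝ) : EReal) * f x + (((1 - t : ℝ)) : EReal) * f y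


section StrictAux

variable {a b : EReal} {f : ℝ → EReal}

lemma posE_coe (r : ℝ) : posE (r : EReal) = ENNReal.ofReal r := by
  simp [posE]

lemma posE_mono : Monotone posE := by
  intro x y h
  unfold posE
  split_ifs with hx hy hy
  · exact le_top
  · exact absurd (top_le_iff.mp (hx ▸ h)) hy
  · exact le_top
  · rcases eq_or_ne x ⊥ with hb | hb
    · simp [hb]
    · exact ENNReal.ofReal_le_ofReal (EReal.toReal_le_toReal h hb hy)

lemma posE_eq_top_iff {x : EReal} : posE x = ⊤ ↔ x = ⊤ := by
  unfold posE
  split_ifs with hx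
  · simp [hx]
  · simp [hx, ENNReal.ofReal_ne_top]

lemma IsF1.le_b (hf : IsF1 a b f) {x : ℝ} (hx : f x ≠ ⊤) :
    a ≤ (x : EReal) ∧ (x : EReal) ≤ b := by
  constructor
  · by_contra h; exact hx (hf.top_outside x (Or.inl (lt_of_not_ge h)))
  · by_contra h; exact hx (hf.top_outside x (Or.inr (lt_of_not_ge h)))

lemma IsF1.conv_real (hf : IsF1 a b f) {x y t : ℝ} (hx : f x ≠ ⊤) (hy : f y ≠ ⊤)
    (ht0 : 0 < t) (ht1 : t < 1) :
    f (t * x + (1 - t) * y) ≠ ⊤ ∧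
      (f (t * x + (1 - t) * y)).toReal ≤ t * (f x).toReal + (1 - t) * (f y).toReal := by
  have hxr : f x = ((f x).toReal : EReal) := (EReal.coe_toReal hx (hf.ne_bot x)).symm
  have hyr : f y = ((f y).toReal : EReal) := (EReal.coe_toReal hy (hf.ne_bot y)).symm
  have h := hf.convex x y t ht0 ht1
  rw [hxr, hyr, ← EReal.coe_mul, ← EReal.coe_mul, ← EReal.coe_add] at h
  have hm : f (t * x + (1 - t) * y) ≠ ⊤ := by
    intro h'; rw [h'] at h
    exact not_le.mpr (EReal.coe_lt_top _) h
  refine ⟨hm, ?_⟩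
  have := EReal.toReal_le_toReal h (hf.ne_bot _) (EReal.coe_ne_top _)
  rwa [EReal.toReal_coe] at this

lemma IsF1.strict_real (hf : IsF1 a b f) (hsc : StrictConvexOnAB a b f) {x y t : ℝ}
    (hx : f x ≠ ⊤) (hy : f y ≠ ⊤) (hxy : x ≠ y) (ht0 : 0 < t) (ht1 : t < 1) :
    (f (t * x + (1 - t) * y)).toReal < t * (f x).toReal + (1 - t) * (f y).toReal := by
  set m := t * x + (1 - t) * y with hm_def
  obtain ⟨hm_ne, _⟩ := hf.conv_real hx hy ht0 ht1
  have hxm : x ≠ m := fun h => hxy (by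
    have : (1 - t) * (x - y) = 0 := by rw [hm_def] at h; linarith [h]
    rcases mul_eq_zero.mp this with h' | h'
    · linarith
    · linarith)
  have hmy : m ≠ y := fun h => hxy (by
    have : t * (x - y) = 0 := by rw [hm_def] at h; linarith [h]
    rcases mul_eq_zero.mp this with h' | h'
    · linarith
    · linarith)
  set u := (x + m) / 2 with hu_def
  set v := (m + y) / 2 with hv_def
  have hxu := hf.conv_real (t := 1/2) hx hm_ne (by norm_num) (by norm_num)
  rw [show (1/2 : ℝ) * x + (1 - 1/2) * m = u by rw [hu_def]; ring] at hxu
  obtain ⟨hu_ne, hu_le⟩ := hxu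
  have hvv := hf.conv_real (t := 1/2) hm_ne hy (by norm_num) (by norm_num)
  rw [show (1/2 : ℝ) * m + (1 - 1/2) * y = v by rw [hv_def]; ring] at hvv
  obtain ⟨hv_ne, hv_le⟩ := hvv
  -- u, v interior
  have key : ∀ p q : ℝ, p ≠ q → f p ≠ ⊤ → f q ≠ ⊤ →
      a < (((p + q) / 2 : ℝ) : EReal) ∧ (((p + q) / 2 : ℝ) : EReal) < b := by
    intro p q hpq hp hq
    obtain ⟨hap, hpb⟩ := hf.le_b hp
    obtain ⟨haq, hqb⟩ := hf.le_b hq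
    constructor
    · rcases lt_or_gt_of_ne hpq with h | h
      · exact lt_of_le_of_lt hap (by exact_mod_cast (by linarith : p < (p + q) / 2))
      · exact lt_of_le_of_lt haq (by exact_mod_cast (by linarith : q < (p + q) / 2))
    · rcases lt_or_gt_of_ne hpq with h | h
      · exact lt_of_lt_of_le (by exact_mod_cast (by linarith : (p + q) / 2 < q) : (((p+q)/2 : ℝ):EReal) < (q:EReal)) hqb
      · exact lt_of_lt_of_le (by exact_mod_cast (by linarith : (p + q) / 2 < p) : (((p+q)/2 : ℝ):EReal) < (p:EReal)) hpb
  obtain ⟨hau, hub⟩ := key x m hxm hx hm_ne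
  obtain ⟨hav, hvb⟩ := key m y hmy hm_ne hy
  have huv : u ≠ v := by
    rw [hu_def, hv_def]
    intro h
    apply hxy
    have : x - y = 0 := by rw [hm_def] at h; linarith [h]
    linarith
  have hs := hsc u v t hau hub hav hvb huv ht0 ht1
  rw [show t * u + (1 - t) * v = m by rw [hu_def, hv_def, hm_def]; ring] at hs
  have hur : f u = ((f u).toReal : EReal) := (EReal.coe_toReal hu_ne (hf.ne_bot u)).symm
  have hvr : f v = ((f v).toReal : EReal) := (EReal.coe_toReal hv_ne (hf.ne_bot v)).symm
  have hmr : f m = ((f m).toReal : EReal) := (EReal.coe_toReal hm_ne (hf.ne_bot m)).symm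
  rw [hur, hvr, hmr, ← EReal.coe_mul, ← EReal.coe_mul, ← EReal.coe_add] at hs
  have hs' : (f m).toReal < t * (f u).toReal + (1 - t) * (f v).toReal := by
    exact_mod_cast hs
  nlinarith [mul_le_mul_of_nonneg_left hu_le (le_of_lt ht0),
    mul_le_mul_of_nonneg_left hv_le (by linarith : (0:ℝ) ≤ 1 - t)]

lemma IsF1.minorant (hf : IsF1 a b f) :
    ∃ c d : ℝ, ∀ x : ℝ, ((c * x + d : ℝ) : EReal) ≤ f x := by
  obtain ⟨x₀, hax₀, hx₀1⟩ := EReal.exists_between_coe_real hf.a_lt_one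
  obtain ⟨x₁, h1x₁, hx₁b⟩ := EReal.exists_between_coe_real hf.one_lt_b
  have hx01 : x₀ < x₁ := by exact_mod_cast hx₀1.trans h1x₁
  have hfx₀ : f x₀ ≠ ⊤ := hf.finite_on x₀ hax₀ (hx₀1.trans (h1x₁.trans hx₁b))
  have hfx₁ : f x₁ ≠ ⊤ := hf.finite_on x₁ ((hax₀.trans hx₀1).trans h1x₁) hx₁b
  set m₀ := (x₀ + x₁) / 2 with hm₀_def
  have hfm₀ : f m₀ ≠ ⊤ := by
    refine hf.finite_on m₀ (lt_of_lt_of_le hax₀ ?_) (lt_of_le_of_lt ?_ hx₁b)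
    · exact_mod_cast (by linarith : x₀ ≤ m₀)
    · exact_mod_cast (by linarith : m₀ ≤ x₁)
  set F : ℝ → ℝ := fun x => (f x).toReal with hF_def
  set s : ℝ := (F x₁ - F x₀) / (x₁ - x₀) with hs_def
  set d : ℝ := min (F x₀ - s * x₀) (2 * F m₀ - max (F x₀) (F x₁) - |s| * max |x₀| |x₁|)
    with hd_def
  refine ⟨s, d, ?_⟩
  have hd1 : d ≤ F x₀ - s * x₀ := min_le_left _ _
  have hd2 : d ≤ 2 * F m₀ - max (F x₀) (F x₁) - |s| * max |x₀| |x₁| := min_le_right _ _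
  have hchord : F x₁ - F x₀ = s * (x₁ - x₀) := by
    rw [hs_def]; field_simp [(by linarith : x₁ - x₀ ≠ 0)]
  intro x
  rcases eq_or_ne (f x) ⊤ with hfx | hfx
  · rw [hfx]; exact le_top
  have hcoe : f x = ((F x : ℝ) : EReal) := (EReal.coe_toReal hfx (hf.ne_bot x)).symm
  rw [hcoe, EReal.coe_le_coe_iff]
  rcases lt_trichotomy x x₀ with hc | hc | hc
  · -- x < x₀
    set θ : ℝ := (x₁ - x₀) / (x₁ - x) with hθ_def
    have hden : 0 < x₁ - x := by linarith
    have hθ0 : 0 < θ := div_pos (by linarith) hden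
    have hθ1 : θ < 1 := (div_lt_one hden).mpr (by linarith)
    have harg : θ * x + (1 - θ) * x₁ = x₀ := by
      rw [hθ_def]; linear_combination -(div_mul_cancel₀ (x₁ - x₀) hden.ne')
    have h := (hf.conv_real hfx hfx₁ hθ0 hθ1).2
    rw [harg] at h
    have h' : F x₀ ≤ θ * F x + (1 - θ) * F x₁ := h
    have hθval : θ * (x₁ - x) = x₁ - x₀ := by
      rw [hθ_def]; field_simp
    have e1 : (1 - θ) * (x₁ - x) = x₀ - x := by
      have : (1 - θ) * (x₁ - x) = (x₁ - x) - θ * (x₁ - x) := by ring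
      rw [this, hθval]; ring
    have key : F x₀ * (x₁ - x) ≤ F x * (x₁ - x₀) + F x₁ * (x₀ - x) := by
      calc F x₀ * (x₁ - x) ≤ (θ * F x + (1 - θ) * F x₁) * (x₁ - x) :=
            mul_le_mul_of_nonneg_right h' hden.le
        _ = F x * (θ * (x₁ - x)) + F x₁ * ((1 - θ) * (x₁ - x)) := by ring
        _ = F x * (x₁ - x₀) + F x₁ * (x₀ - x) := by rw [hθval, e1]
    have key2 : F x₀ - F x ≤ s * (x₀ - x) := by
      rw [hs_def, div_mul_eq_mul_div, le_div_iff₀ (by linarith : (0:ℝ) < x₁ - x₀)]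
      nlinarith [key]
    linarith [hd1, key2]
  · -- x = x₀
    subst hc
    linarith [hd1]
  rcases lt_trichotomy x x₁ with hc' | hc' | hc'
  · -- x₀ < x < x₁
    set y := x₀ + x₁ - x with hy_def
    have hay : a < (y : EReal) :=
      lt_of_lt_of_le hax₀ (by exact_mod_cast (by linarith : x₀ ≤ y))
    have hyb : (y : EReal) < b :=
      lt_of_le_of_lt (by exact_mod_cast (by linarith : y ≤ x₁)) hx₁b
    have hfy : f y ≠ ⊤ := hf.finite_on y hay hyb
    have hmid := (hf.conv_real (t := 1/2) hfx hfy (by norm_num) (by norm_num)).2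
    rw [show (1/2 : ℝ) * x + (1 - 1/2) * y = m₀ by rw [hy_def, hm₀_def]; ring] at hmid
    have hmid' : F m₀ ≤ 1/2 * F x + 1/2 * F y := by
      have : F m₀ ≤ 1/2 * F x + (1 - 1/2) * F y := hmid
      linarith [this]
    -- F y ≤ max (F x₀) (F x₁)
    have hymax : F y ≤ max (F x₀) (F x₁) := by
      set σ : ℝ := (x₁ - y) / (x₁ - x₀) with hσ_def
      have hden : 0 < x₁ - x₀ := by linarith
      have hσ0 : 0 < σ := div_pos (by rw [hy_def]; linarith) hden
      have hσ1 : σ < 1 := (div_lt_one hden).mpr (by rw [hy_def]; linarith)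
      have harg2 : σ * x₀ + (1 - σ) * x₁ = y := by
        rw [hσ_def]; linear_combination -(div_mul_cancel₀ (x₁ - y) hden.ne')
      have h2 := (hf.conv_real hfx₀ hfx₁ hσ0 hσ1).2
      rw [harg2] at h2
      have h2' : F y ≤ σ * F x₀ + (1 - σ) * F x₁ := h2
      have : σ * F x₀ + (1 - σ) * F x₁ ≤ max (F x₀) (F x₁) := by
        have h3 : F x₀ ≤ max (F x₀) (F x₁) := le_max_left _ _
        have h4 : F x₁ ≤ max (F x₀) (F x₁) := le_max_right _ _
        nlinarith [h3, h4]
      linarith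
    have hFx_lb : 2 * F m₀ - max (F x₀) (F x₁) ≤ F x := by linarith [hmid', hymax]
    have hsx : s * x ≤ |s| * max |x₀| |x₁| := by
      calc s * x ≤ |s * x| := le_abs_self _
        _ = |s| * |x| := abs_mul s x
        _ ≤ |s| * max |x₀| |x₁| := by
            refine mul_le_mul_of_nonneg_left (abs_le.mpr ⟨?_, ?_⟩) (abs_nonneg s)
            · exact le_trans (neg_le_neg (le_max_left |x₀| |x₁|))
                (le_trans (neg_abs_le x₀) hc.le)
            · exact le_trans hc'.le (le_trans (le_abs_self x₁) (le_max_right |x₀| |x₁|))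
    linarith [hd2, hFx_lb, hsx]
  · subst hc'
    linarith [hd1, hchord]
  · -- x₁ < x
    set θ : ℝ := (x₁ - x₀) / (x - x₀) with hθ_def
    have hden : 0 < x - x₀ := by linarith
    have hθ0 : 0 < θ := div_pos (by linarith) hden
    have hθ1 : θ < 1 := (div_lt_one hden).mpr (by linarith)
    have harg : θ * x + (1 - θ) * x₀ = x₁ := by
      rw [hθ_def]; linear_combination (div_mul_cancel₀ (x₁ - x₀) hden.ne')
    have h := (hf.conv_real hfx hfx₀ hθ0 hθ1).2
    rw [harg] at h
    have h' : F x₁ ≤ θ * F x + (1 - θ) * F x₀ := h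
    have hθval : θ * (x - x₀) = x₁ - x₀ := by
      rw [hθ_def]; field_simp
    have e1 : (1 - θ) * (x - x₀) = x - x₁ := by
      have : (1 - θ) * (x - x₀) = (x - x₀) - θ * (x - x₀) := by ring
      rw [this, hθval]; ring
    have key : F x₁ * (x - x₀) ≤ F x * (x₁ - x₀) + F x₀ * (x - x₁) := by
      calc F x₁ * (x - x₀) ≤ (θ * F x + (1 - θ) * F x₀) * (x - x₀) :=
            mul_le_mul_of_nonneg_right h' hden.le
        _ = F x * (θ * (x - x₀)) + F x₀ * ((1 - θ) * (x - x₀)) := by ring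
        _ = F x * (x₁ - x₀) + F x₀ * (x - x₁) := by rw [hθval, e1]
    have key2 : s * (x - x₀) ≤ F x - F x₀ := by
      rw [hs_def, div_mul_eq_mul_div, div_le_iff₀ (by linarith : (0:ℝ) < x₁ - x₀)]
      nlinarith [key]
    linarith [hd1, key2]

lemma ennreal_coe_ereal_toReal {x : ℝ≥0∞} (hx : x ≠ ⊤) :
    ((x.toReal : ℝ) : EReal) = (x : EReal) := by
  rw [← EReal.toReal_coe_ennreal]
  exact EReal.coe_toReal (by simp [hx]) (by simp)

lemma eIntegral_eq_integral {Ω : Type*} [MeasurableSpace Ω] {P : Measure Ω} {h : Ω → EReal}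
    (hm : AEMeasurable h P) (hbot : ∀ᵐ x ∂P, h x ≠ ⊥) (htop : ∀ᵐ x ∂P, h x ≠ ⊤)
    (hA : ∫⁻ x, posE (h x) ∂P ≠ ⊤) (hN : ∫⁻ x, posE (-(h x)) ∂P ≠ ⊤) :
    Integrable (fun x => (h x).toReal) P ∧
      eIntegral P h = ((∫ x, (h x).toReal ∂P : ℝ) : EReal) := by
  have hmeas : AEMeasurable (fun x => (h x).toReal) P :=
    measurable_ereal_toReal.comp_aemeasurable hm
  have hAeq : (∫⁻ x, ENNReal.ofReal ((h x).toReal) ∂P) = ∫⁻ x, posE (h x) ∂P := by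
    refine lintegral_congr_ae ?_
    filter_upwards [htop] with x hx
    simp [posE, hx]
  have hNeq : (∫⁻ x, ENNReal.ofReal (-(h x).toReal) ∂P) = ∫⁻ x, posE (-(h x)) ∂P := by
    refine lintegral_congr_ae ?_
    filter_upwards [hbot] with x hx
    have hne : -(h x) ≠ ⊤ := by
      simp only [ne_eq, EReal.neg_eq_top_iff]
      exact hx
    simp [posE, hne, EReal.toReal_neg]
  have hint : Integrable (fun x => (h x).toReal) P := by
    refine ⟨hmeas.aestronglyMeasurable, ?_⟩
    rw [hasFiniteIntegral_iff_norm]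
    have hb : ∀ x : Ω, ENNReal.ofReal ‖(h x).toReal‖ ≤
        ENNReal.ofReal ((h x).toReal) + ENNReal.ofReal (-(h x).toReal) := by
      intro x
      rcases le_or_gt 0 ((h x).toReal) with hr | hr
      · rw [Real.norm_eq_abs, abs_of_nonneg hr]
        exact le_add_of_le_of_nonneg le_rfl zero_le
      · rw [Real.norm_eq_abs, abs_of_neg hr]
        exact le_add_of_nonneg_of_le zero_le le_rfl
    calc (∫⁻ x, ENNReal.ofReal ‖(h x).toReal‖ ∂P)
        ≤ ∫⁻ x, (ENNReal.ofReal ((h x).toReal) + ENNReal.ofReal (-(h x).toReal)) ∂P :=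
          lintegral_mono hb
      _ = (∫⁻ x, ENNReal.ofReal ((h x).toReal) ∂P)
          + ∫⁻ x, ENNReal.ofReal (-(h x).toReal) ∂P := by
          exact lintegral_add_left' (ENNReal.measurable_ofReal.comp_aemeasurable hmeas) _
      _ < ⊤ := by
          rw [hAeq, hNeq]
          exact ENNReal.add_lt_top.mpr ⟨hA.lt_top, hN.lt_top⟩
  refine ⟨hint, ?_⟩
  rw [integral_eq_lintegral_pos_part_sub_lintegral_neg_part hint]
  unfold eIntegral
  rw [← hAeq, ← hNeq]
  rw [← ennreal_coe_ereal_toReal (hAeq ▸ hA), ← ennreal_coe_ereal_toReal (hNeq ▸ hN)]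
  exact_mod_cast rfl

lemma measurable_posE : Measurable posE := by
  unfold posE
  exact Measurable.ite
    (by simpa [Set.setOf_eq_eq_singleton] using measurableSet_singleton (⊤ : EReal))
    measurable_const (ENNReal.measurable_ofReal.comp measurable_ereal_toReal)

lemma neg_part_bound {Ω : Type*} [MeasurableSpace Ω] (P : Measure Ω) [IsProbabilityMeasure P]
    (Q : Measure Ω) [IsFiniteMeasure Q] (f : ℝ → EReal) (c d : ℝ)
    (hmin : ∀ x : ℝ, ((c * x + d : ℝ) : EReal) ≤ f x) :
    ∫⁻ x, posE (-(f ((Q.rnDeriv P x).toReal))) ∂P ≠ ⊤ := by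
  have hb : ∀ x : Ω, posE (-(f ((Q.rnDeriv P x).toReal))) ≤
      ENNReal.ofReal |c| * Q.rnDeriv P x + ENNReal.ofReal |d| := by
    intro x
    set r := (Q.rnDeriv P x).toReal with hr
    have hr0 : 0 ≤ r := ENNReal.toReal_nonneg
    have h1 : -(f r) ≤ ((-(c * r + d) : ℝ) : EReal) := by
      rw [EReal.coe_neg]
      exact EReal.neg_le_neg_iff.mpr (hmin r)
    calc posE (-(f r)) ≤ posE ((-(c * r + d) : ℝ) : EReal) := posE_mono h1
      _ = ENNReal.ofReal (-(c * r + d)) := posE_coe _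
      _ ≤ ENNReal.ofReal (|c| * r + |d|) := by
          refine ENNReal.ofReal_le_ofReal ?_
          have h2 : -c * r ≤ |c| * r := mul_le_mul_of_nonneg_right (neg_le_abs c) hr0
          have h3 : -d ≤ |d| := neg_le_abs d
          nlinarith
      _ = ENNReal.ofReal (|c| * r) + ENNReal.ofReal |d| :=
          ENNReal.ofReal_add (by positivity) (abs_nonneg d)
      _ = ENNReal.ofReal |c| * ENNReal.ofReal r + ENNReal.ofReal |d| := by
          rw [ENNReal.ofReal_mul (abs_nonneg c)]
      _ ≤ ENNReal.ofReal |c| * Q.rnDeriv P x + ENNReal.ofReal |d| := by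
          gcongr
          exact ENNReal.ofReal_toReal_le
  have hle : ∫⁻ x, posE (-(f ((Q.rnDeriv P x).toReal))) ∂P
      ≤ ENNReal.ofReal |c| * Q univ + ENNReal.ofReal |d| := by
    calc ∫⁻ x, posE (-(f ((Q.rnDeriv P x).toReal))) ∂P
        ≤ ∫⁻ x, (ENNReal.ofReal |c| * Q.rnDeriv P x + ENNReal.ofReal |d|) ∂P :=
          lintegral_mono hb
      _ = ENNReal.ofReal |c| * (∫⁻ x, Q.rnDeriv P x ∂P) + ENNReal.ofReal |d| := by
          rw [lintegral_add_right _ measurable_const,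
            lintegral_const_mul _ (Q.measurable_rnDeriv P), lintegral_const,
            measure_univ, mul_one]
      _ ≤ ENNReal.ofReal |c| * Q univ + ENNReal.ofReal |d| := by
          gcongr
          exact Measure.lintegral_rnDeriv_le
  exact ne_top_of_le_ne_top (by
    exact ENNReal.add_ne_top.mpr ⟨ENNReal.mul_ne_top ENNReal.ofReal_ne_top
      (measure_ne_top Q univ), ENNReal.ofReal_ne_top⟩) hle

end StrictAux

/-- If `f ∈ F₁(a,b)` is strictly convex on `(a,b)` then `Q ↦ D_f(Q‖P)` is
strictly convex on `{Q : D_f(Q‖P) < ∞}`. -/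
theorem stmt3 {Ω : Type*} [MeasurableSpace Ω] (a b : EReal) (f : ℝ → EReal)
    (hf : IsF1 a b f) (hsc : StrictConvexOnAB a b f)
    (P : Measure Ω) [IsProbabilityMeasure P]
    (Q₀ Q₁ : Measure Ω) [IsProbabilityMeasure Q₀] [IsProbabilityMeasure Q₁]
    (hne : Q₀ ≠ Q₁) (h₀ : fDivE f Q₀ P < ⊤) (h₁ : fDivE f Q₁ P < ⊤)
    (t : ℝ) (ht0 : 0 < t) (ht1 : t < 1) :
    fDivE f (ENNReal.ofReal t • Q₁ + ENNReal.ofReal (1 - t) • Q₀) P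
      < ((t : ℝ) : EReal) * fDivE f Q₁ P + (((1 - t : ℝ)) : EReal) * fDivE f Q₀ P := by
  -- absolute continuity
  have hQP₁ : Q₁ ≪ P := by
    by_contra hc; rw [fDivE, if_neg hc] at h₁; exact lt_irrefl _ h₁
  have hQP₀ : Q₀ ≪ P := by
    by_contra hc; rw [fDivE, if_neg hc] at h₀; exact lt_irrefl _ h₀
  haveI hfin1 : IsFiniteMeasure (ENNReal.ofReal t • Q₁) := by
    refine ⟨?_⟩
    simp only [Measure.smul_apply, smul_eq_mul, measure_univ, mul_one]
    exact ENNReal.ofReal_lt_top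
  haveI hfin0 : IsFiniteMeasure (ENNReal.ofReal (1 - t) • Q₀) := by
    refine ⟨?_⟩
    simp only [Measure.smul_apply, smul_eq_mul, measure_univ, mul_one]
    exact ENNReal.ofReal_lt_top
  set Qt : Measure Ω := ENNReal.ofReal t • Q₁ + ENNReal.ofReal (1 - t) • Q₀ with hQt_def
  haveI : IsFiniteMeasure Qt := by rw [hQt_def]; infer_instance
  have hQtP : Qt ≪ P := by
    refine Measure.AbsolutelyContinuous.mk fun s hs h0 => ?_
    rw [hQt_def]
    simp [Measure.add_apply, Measure.smul_apply, hQP₁ h0, hQP₀ h0]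
  -- notation
  obtain ⟨c, d, hmin⟩ := hf.minorant
  have hmeasf : Measurable f := hf.lsc.measurable
  set φ1 : Ω → ℝ := fun x => (f ((Q₁.rnDeriv P x).toReal)).toReal with hφ1_def
  set φ0 : Ω → ℝ := fun x => (f ((Q₀.rnDeriv P x).toReal)).toReal with hφ0_def
  set φt : Ω → ℝ := fun x => (f ((Qt.rnDeriv P x).toReal)).toReal with hφt_def
  have hm1 : AEMeasurable (fun x => f ((Q₁.rnDeriv P x).toReal)) P :=
    (hmeasf.comp ((Q₁.measurable_rnDeriv P).ennreal_toReal)).aemeasurable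
  have hm0 : AEMeasurable (fun x => f ((Q₀.rnDeriv P x).toReal)) P :=
    (hmeasf.comp ((Q₀.measurable_rnDeriv P).ennreal_toReal)).aemeasurable
  have hmt : AEMeasurable (fun x => f ((Qt.rnDeriv P x).toReal)) P :=
    (hmeasf.comp ((Qt.measurable_rnDeriv P).ennreal_toReal)).aemeasurable
  have hbot1 : ∀ᵐ x ∂P, f ((Q₁.rnDeriv P x).toReal) ≠ ⊥ :=
    Eventually.of_forall fun x => hf.ne_bot _
  have hbot0 : ∀ᵐ x ∂P, f ((Q₀.rnDeriv P x).toReal) ≠ ⊥ :=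
    Eventually.of_forall fun x => hf.ne_bot _
  have hbott : ∀ᵐ x ∂P, f ((Qt.rnDeriv P x).toReal) ≠ ⊥ :=
    Eventually.of_forall fun x => hf.ne_bot _
  -- negative parts finite
  have hN1 := neg_part_bound P Q₁ f c d hmin
  have hN0 := neg_part_bound P Q₀ f c d hmin
  have hNt := neg_part_bound P Qt f c d hmin
  -- positive parts finite for Q₀, Q₁
  have hA1 : ∫⁻ x, posE (f ((Q₁.rnDeriv P x).toReal)) ∂P ≠ ⊤ := by
    intro hAtop
    rw [fDivE, if_pos hQP₁] at h₁
    unfold eIntegral at h₁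
    rw [hAtop, ← ennreal_coe_ereal_toReal hN1, EReal.coe_ennreal_top,
      EReal.top_sub_coe] at h₁
    exact lt_irrefl _ h₁
  have hA0 : ∫⁻ x, posE (f ((Q₀.rnDeriv P x).toReal)) ∂P ≠ ⊤ := by
    intro hAtop
    rw [fDivE, if_pos hQP₀] at h₀
    unfold eIntegral at h₀
    rw [hAtop, ← ennreal_coe_ereal_toReal hN0, EReal.coe_ennreal_top,
      EReal.top_sub_coe] at h₀
    exact lt_irrefl _ h₀
  -- a.e. f finite at the densities
  have htop1 : ∀ᵐ x ∂P, f ((Q₁.rnDeriv P x).toReal) ≠ ⊤ := by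
    filter_upwards [ae_lt_top (measurable_posE.comp
      (hmeasf.comp ((Q₁.measurable_rnDeriv P).ennreal_toReal))) hA1] with x hx
    intro h; simp only [Function.comp_apply, h] at hx; simp [posE] at hx
  have htop0 : ∀ᵐ x ∂P, f ((Q₀.rnDeriv P x).toReal) ≠ ⊤ := by
    filter_upwards [ae_lt_top (measurable_posE.comp
      (hmeasf.comp ((Q₀.measurable_rnDeriv P).ennreal_toReal))) hA0] with x hx
    intro h; simp only [Function.comp_apply, h] at hx; simp [posE] at hx
  -- Bochner versions for Q₀, Q₁
  obtain ⟨int1, eq1⟩ := eIntegral_eq_integral hm1 hbot1 htop1 hA1 hN1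
  obtain ⟨int0, eq0⟩ := eIntegral_eq_integral hm0 hbot0 htop0 hA0 hN0
  -- density of the mixture
  have hrt : Qt.rnDeriv P =ᵐ[P]
      fun x => ENNReal.ofReal t * Q₁.rnDeriv P x + ENNReal.ofReal (1 - t) * Q₀.rnDeriv P x := by
    have h1 := Measure.rnDeriv_add (ENNReal.ofReal t • Q₁) (ENNReal.ofReal (1 - t) • Q₀) P
    have h2 := Measure.rnDeriv_smul_left_of_ne_top Q₁ P (ENNReal.ofReal_ne_top (r := t))
    have h3 := Measure.rnDeriv_smul_left_of_ne_top Q₀ P (ENNReal.ofReal_ne_top (r := 1 - t))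
    rw [hQt_def]
    filter_upwards [h1, h2, h3] with x e1 e2 e3
    rw [e1]
    simp only [Pi.add_apply, Pi.smul_apply, e2, e3, smul_eq_mul]
  have hae_fin1 : ∀ᵐ x ∂P, Q₁.rnDeriv P x < ⊤ := Q₁.rnDeriv_lt_top P
  have hae_fin0 : ∀ᵐ x ∂P, Q₀.rnDeriv P x < ⊤ := Q₀.rnDeriv_lt_top P
  have key_ae : ∀ᵐ x ∂P, (Qt.rnDeriv P x).toReal
      = t * (Q₁.rnDeriv P x).toReal + (1 - t) * (Q₀.rnDeriv P x).toReal := by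
    filter_upwards [hrt, hae_fin1, hae_fin0] with x e h1 h0
    rw [e, ENNReal.toReal_add (ENNReal.mul_ne_top ENNReal.ofReal_ne_top h1.ne)
      (ENNReal.mul_ne_top ENNReal.ofReal_ne_top h0.ne), ENNReal.toReal_mul,
      ENNReal.toReal_mul, ENNReal.toReal_ofReal ht0.le,
      ENNReal.toReal_ofReal (by linarith : (0:ℝ) ≤ 1 - t)]
  -- pointwise comparison
  have hptwise : ∀ᵐ x ∂P, f ((Qt.rnDeriv P x).toReal) ≠ ⊤ ∧
      φt x ≤ t * φ1 x + (1 - t) * φ0 x ∧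
      (Q₀.rnDeriv P x ≠ Q₁.rnDeriv P x → φt x < t * φ1 x + (1 - t) * φ0 x) := by
    filter_upwards [key_ae, htop1, htop0, hae_fin1, hae_fin0] with x e hT1 hT0 hfin1' hfin0'
    rcases eq_or_ne ((Q₁.rnDeriv P x).toReal) ((Q₀.rnDeriv P x).toReal) with heq | hne2
    · have e' : (Qt.rnDeriv P x).toReal = (Q₀.rnDeriv P x).toReal := by
        rw [e, heq]; ring
      refine ⟨by rw [e']; exact hT0, ?_, ?_⟩
      · rw [hφt_def, hφ1_def, hφ0_def]
        simp only
        rw [e', heq]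
        ring_nf
        exact le_refl _
      · intro hne3
        exact absurd ((ENNReal.toReal_eq_toReal_iff' hfin1'.ne hfin0'.ne).mp heq).symm hne3
    · have hcr := hf.conv_real hT1 hT0 ht0 ht1
      rw [← e] at hcr
      have hst := hf.strict_real hsc hT1 hT0 hne2 ht0 ht1
      rw [← e] at hst
      exact ⟨hcr.1, hcr.2, fun _ => hst⟩
  -- positive part of the mixture is finite
  have hAt : ∫⁻ x, posE (f ((Qt.rnDeriv P x).toReal)) ∂P ≠ ⊤ := by
    have hnorm1 : ∫⁻ x, ENNReal.ofReal ‖φ1 x‖ ∂P < ⊤ := (hasFiniteIntegral_iff_norm φ1).mp int1.2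
    have hnorm0 : ∫⁻ x, ENNReal.ofReal ‖φ0 x‖ ∂P < ⊤ := (hasFiniteIntegral_iff_norm φ0).mp int0.2
    have mφ1 : Measurable φ1 :=
      measurable_ereal_toReal.comp (hmeasf.comp ((Q₁.measurable_rnDeriv P).ennreal_toReal))
    have mφ0 : Measurable φ0 :=
      measurable_ereal_toReal.comp (hmeasf.comp ((Q₀.measurable_rnDeriv P).ennreal_toReal))
    have hb : ∀ᵐ x ∂P, posE (f ((Qt.rnDeriv P x).toReal)) ≤
        ENNReal.ofReal t * ENNReal.ofReal ‖φ1 x‖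
          + ENNReal.ofReal (1 - t) * ENNReal.ofReal ‖φ0 x‖ := by
      filter_upwards [hptwise] with x hx
      obtain ⟨hT, hle, -⟩ := hx
      have hreal : φt x ≤ t * ‖φ1 x‖ + (1 - t) * ‖φ0 x‖ := by
        have a1 : φ1 x ≤ ‖φ1 x‖ := le_abs_self _
        have a0 : φ0 x ≤ ‖φ0 x‖ := le_abs_self _
        nlinarith [hle, mul_le_mul_of_nonneg_left a1 ht0.le,
          mul_le_mul_of_nonneg_left a0 (by linarith : (0:ℝ) ≤ 1 - t)]
      have h1 : f ((Qt.rnDeriv P x).toReal)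
          ≤ ((t * ‖φ1 x‖ + (1 - t) * ‖φ0 x‖ : ℝ) : EReal) := by
        calc f ((Qt.rnDeriv P x).toReal) = ((φt x : ℝ) : EReal) :=
              (EReal.coe_toReal hT (hf.ne_bot _)).symm
          _ ≤ _ := by exact_mod_cast hreal
      calc posE (f ((Qt.rnDeriv P x).toReal))
          ≤ posE ((t * ‖φ1 x‖ + (1 - t) * ‖φ0 x‖ : ℝ) : EReal) := posE_mono h1
        _ = ENNReal.ofReal (t * ‖φ1 x‖ + (1 - t) * ‖φ0 x‖) := posE_coe _
        _ = ENNReal.ofReal (t * ‖φ1 x‖) + ENNReal.ofReal ((1 - t) * ‖φ0 x‖) :=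
            ENNReal.ofReal_add (mul_nonneg ht0.le (norm_nonneg _))
              (mul_nonneg (by linarith) (norm_nonneg _))
        _ = ENNReal.ofReal t * ENNReal.ofReal ‖φ1 x‖
            + ENNReal.ofReal (1 - t) * ENNReal.ofReal ‖φ0 x‖ := by
            rw [ENNReal.ofReal_mul ht0.le, ENNReal.ofReal_mul (by linarith : (0:ℝ) ≤ 1 - t)]
    have hchain : ∫⁻ x, posE (f ((Qt.rnDeriv P x).toReal)) ∂P
        ≤ ENNReal.ofReal t * (∫⁻ x, ENNReal.ofReal ‖φ1 x‖ ∂P)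
          + ENNReal.ofReal (1 - t) * ∫⁻ x, ENNReal.ofReal ‖φ0 x‖ ∂P := by
      calc ∫⁻ x, posE (f ((Qt.rnDeriv P x).toReal)) ∂P
          ≤ ∫⁻ x, (ENNReal.ofReal t * ENNReal.ofReal ‖φ1 x‖
            + ENNReal.ofReal (1 - t) * ENNReal.ofReal ‖φ0 x‖) ∂P := lintegral_mono_ae hb
        _ = _ := by
            rw [lintegral_add_left
              (f := fun x => ENNReal.ofReal t * ENNReal.ofReal ‖φ1 x‖) (by fun_prop),
              lintegral_const_mul _ (by fun_prop : Measurable fun x => ENNReal.ofReal ‖φ1 x‖),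
              lintegral_const_mul _ (by fun_prop : Measurable fun x => ENNReal.ofReal ‖φ0 x‖)]
    exact ne_top_of_le_ne_top (by
      exact ENNReal.add_ne_top.mpr ⟨ENNReal.mul_ne_top ENNReal.ofReal_ne_top hnorm1.ne,
        ENNReal.mul_ne_top ENNReal.ofReal_ne_top hnorm0.ne⟩) hchain
  have htopt : ∀ᵐ x ∂P, f ((Qt.rnDeriv P x).toReal) ≠ ⊤ := by
    filter_upwards [hptwise] with x hx; exact hx.1
  obtain ⟨intt, eqt⟩ := eIntegral_eq_integral hmt hbott htopt hAt hNt
  -- strict integral inequality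
  have hint_lt : ∫ x, φt x ∂P < t * ∫ x, φ1 x ∂P + (1 - t) * ∫ x, φ0 x ∂P := by
    set g : Ω → ℝ := fun x => t * φ1 x + (1 - t) * φ0 x - φt x with hg_def
    have intg : Integrable g P := ((int1.const_mul t).add (int0.const_mul (1 - t))).sub intt
    have hg0 : 0 ≤ᵐ[P] g := by
      filter_upwards [hptwise] with x hx
      have := hx.2.1
      simp only [hg_def, Pi.zero_apply]
      linarith
    have hSne : P {x | Q₀.rnDeriv P x ≠ Q₁.rnDeriv P x} ≠ 0 := by
      intro hS0
      apply hne
      have hee : Q₀.rnDeriv P =ᵐ[P] Q₁.rnDeriv P := by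
        rw [Filter.EventuallyEq, ae_iff]
        simpa using hS0
      calc Q₀ = P.withDensity (Q₀.rnDeriv P) := (Measure.withDensity_rnDeriv_eq _ _ hQP₀).symm
        _ = P.withDensity (Q₁.rnDeriv P) := withDensity_congr_ae hee
        _ = Q₁ := Measure.withDensity_rnDeriv_eq _ _ hQP₁
    have hbad := ae_iff.mp hptwise
    have hsupp : 0 < P (Function.support g) := by
      rw [pos_iff_ne_zero]
      intro hsup0
      apply hSne
      have hsub : {x | Q₀.rnDeriv P x ≠ Q₁.rnDeriv P x} ⊆
          {x | ¬ (f ((Qt.rnDeriv P x).toReal) ≠ ⊤ ∧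
            φt x ≤ t * φ1 x + (1 - t) * φ0 x ∧
            (Q₀.rnDeriv P x ≠ Q₁.rnDeriv P x → φt x < t * φ1 x + (1 - t) * φ0 x))}
            ∪ Function.support g := by
        intro x hx
        by_cases hPx : (f ((Qt.rnDeriv P x).toReal) ≠ ⊤ ∧
            φt x ≤ t * φ1 x + (1 - t) * φ0 x ∧
            (Q₀.rnDeriv P x ≠ Q₁.rnDeriv P x → φt x < t * φ1 x + (1 - t) * φ0 x))
        · right
          refine Function.mem_support.mpr (ne_of_gt ?_)
          have := hPx.2.2 hx
          simp only [hg_def]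
          linarith
        · exact Or.inl hPx
      refine le_antisymm ?_ zero_le
      calc P {x | Q₀.rnDeriv P x ≠ Q₁.rnDeriv P x}
          ≤ P ({x | ¬ (f ((Qt.rnDeriv P x).toReal) ≠ ⊤ ∧
            φt x ≤ t * φ1 x + (1 - t) * φ0 x ∧
            (Q₀.rnDeriv P x ≠ Q₁.rnDeriv P x → φt x < t * φ1 x + (1 - t) * φ0 x))}
            ∪ Function.support g) := measure_mono hsub
        _ ≤ _ + _ := measure_union_le _ _
        _ = 0 := by rw [hbad, hsup0, add_zero]
    have hpos : 0 < ∫ x, g x ∂P :=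
      (integral_pos_iff_support_of_nonneg_ae hg0 intg).mpr hsupp
    have heqg : ∫ x, g x ∂P
        = t * ∫ x, φ1 x ∂P + (1 - t) * ∫ x, φ0 x ∂P - ∫ x, φt x ∂P := by
      have i1 : Integrable (fun x => t * φ1 x) P := int1.const_mul t
      have i0 : Integrable (fun x => (1 - t) * φ0 x) P := int0.const_mul (1 - t)
      have i01 : Integrable (fun x => t * φ1 x + (1 - t) * φ0 x) P := i1.add i0
      simp only [hg_def]
      rw [integral_sub i01 intt, integral_add i1 i0,
        integral_const_mul, integral_const_mul]
    linarith [hpos, heqg.symm.le, heqg.le]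
  -- conclude
  have goal1 : fDivE f Qt P = ((∫ x, φt x ∂P : ℝ) : EReal) := by
    rw [fDivE, if_pos hQtP]; exact eqt
  have goal2 : fDivE f Q₁ P = ((∫ x, φ1 x ∂P : ℝ) : EReal) := by
    rw [fDivE, if_pos hQP₁]; exact eq1
  have goal3 : fDivE f Q₀ P = ((∫ x, φ0 x ∂P : ℝ) : EReal) := by
    rw [fDivE, if_pos hQP₀]; exact eq0
  rw [goal1, goal2, goal3, ← EReal.coe_mul, ← EReal.coe_mul, ← EReal.coe_add]
  exact_mod_cast hint_lt
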